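/- For every doubly-connected graph G of order n ≥ 5, 4 ≤ λ(G) + λ(Ḡ) ≤ 2n − 5. -/
import Mathlib
open SimpleGraph

universe u
variable {V : Type u}

/-- An induced path on four vertices. -/
def HasIP4 {V : Type u} (G : SimpleGraph V) : Prop :=
  ∃ a b c d : V, G.Adj a b ∧ G.Adj b c ∧ G.Adj c d ∧ ¬G.Adj a c ∧ ¬G.Adj a d ∧ ¬G.Adj b d

lemma exists_adj_of_reachable {G : SimpleGraph V} {a b : V} (h : G.Reachable a b)
    (hne : a ≠ b) : ∃ c, G.Adj a c := by
  obtain ⟨w⟩ := h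
  cases w with
  | nil => exact absurd rfl hne
  | cons h _ => exact ⟨_, h⟩

lemma walk_W1 {G : SimpleGraph V} : ∀ {u v : V} (_ : G.Walk u v), u ≠ v →
    G.Adj v u ∨ ∃ a b, G.Adj v a ∧ G.Adj a b ∧ ¬G.Adj v b ∧ b ≠ v := by
  intro u v w
  induction w with
  | nil => intro h; exact absurd rfl h
  | @cons u m v h p ih =>
    intro hu
    by_cases hm : m = v
    · subst hm; exact Or.inl h.symm
    · rcases ih hm with h1 | ⟨a, b, h1, h2, h3, h4⟩
      · by_cases hvu : G.Adj v u
        · exact Or.inl hvu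
        · exact Or.inr ⟨m, u, h1, h.symm, hvu, hu⟩
      · exact Or.inr ⟨a, b, h1, h2, h3, h4⟩

lemma walk_W2 {G : SimpleGraph V} : ∀ {z v : V} (_ : G.Walk z v) (hz : z ≠ v),
    ∃ c, ∃ hc : c ≠ v, G.Adj v c ∧
      (G.induce {w | w ≠ v}).Reachable ⟨c, hc⟩ ⟨z, hz⟩ := by
  intro z v w
  induction w with
  | nil => intro h; exact absurd rfl h
  | @cons z m v h p ih =>
    intro hz
    by_cases hm : m = v
    · subst hm
      exact ⟨z, hz, h.symm, Reachable.refl _⟩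
    · obtain ⟨c, hc, hvc, hr⟩ := ih hm
      refine ⟨c, hc, hvc, hr.trans ?_⟩
      exact (show (G.induce {w | w ≠ v}).Adj ⟨m, hm⟩ ⟨z, hz⟩ from h.symm).reachable

lemma adj_of_not_compl {G : SimpleGraph V} {a b : V} (h : a ≠ b) (h2 : ¬Gᶜ.Adj a b) :
    G.Adj a b := by have := G.compl_adj a b; tauto

lemma not_adj_of_compl {G : SimpleGraph V} {a b : V} (h : Gᶜ.Adj a b) : ¬G.Adj a b :=
  ((G.compl_adj a b).mp h).2

lemma cadj {G : SimpleGraph V} {a b : V} (h1 : a ≠ b) (h2 : ¬G.Adj a b) : Gᶜ.Adj a b :=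
  (G.compl_adj a b).mpr ⟨h1, h2⟩

lemma hasIP4_of_compl {G : SimpleGraph V} (h : HasIP4 Gᶜ) : HasIP4 G := by
  obtain ⟨p, q, r, s, h1, h2, h3, h4, h5, h6⟩ := h
  have hpr : p ≠ r := by rintro rfl; exact h5 h3
  have hps : p ≠ s := by rintro rfl; exact h4 h3.symm
  have hqs : q ≠ s := by rintro rfl; exact h5 h1
  refine ⟨r, p, s, q, (adj_of_not_compl hpr h4).symm, adj_of_not_compl hps h5,
    (adj_of_not_compl hqs h6).symm, not_adj_of_compl h3, fun hh => not_adj_of_compl h2 hh.symm,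
    not_adj_of_compl h1⟩

lemma hasIP4_induce {G : SimpleGraph V} {s : Set V} (h : HasIP4 (G.induce s)) : HasIP4 G := by
  obtain ⟨a, b, c, d, h1, h2, h3, h4, h5, h6⟩ := h
  exact ⟨a, b, c, d, h1, h2, h3, h4, h5, h6⟩

lemma compl_induce (G : SimpleGraph V) (s : Set V) : Gᶜ.induce s = (G.induce s)ᶜ := by
  ext a b
  show Gᶜ.Adj a.1 b.1 ↔ _
  rw [compl_adj, compl_adj]
  simp only [comap_adj, Function.Embedding.coe_subtype]
  constructor
  · rintro ⟨h1, h2⟩; exact ⟨fun hh => h1 (congrArg Subtype.val hh), h2⟩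
  · rintro ⟨h1, h2⟩; exact ⟨fun hh => h1 (Subtype.ext hh), h2⟩

/-- If `G` and `Gᶜ` are connected and deleting `v` disconnects `G`,
then `G` has an induced `P₄`. -/
lemma hasIP4_of_delete_disconnects {G : SimpleGraph V} (hG : G.Connected)
    (hGc : Gᶜ.Connected) (v : V) (hnt : ∃ u : V, u ≠ v)
    (hd : ¬(G.induce {w | w ≠ v}).Connected) : HasIP4 G := by
  classical
  obtain ⟨u0, hu0⟩ := hnt
  obtain ⟨u, hu⟩ : ∃ u, Gᶜ.Adj v u :=
    exists_adj_of_reachable (hGc.preconnected v u0) (fun hh => hu0 hh.symm)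
  have hvu : ¬G.Adj v u := not_adj_of_compl hu
  have huv : u ≠ v := hu.ne'
  obtain ⟨w⟩ := hG.preconnected u v
  rcases walk_W1 w huv with hadj | ⟨a, b, h1, h2, h3, h4⟩
  · exact absurd hadj hvu
  set G' := G.induce {w | w ≠ v} with hG'
  have hnonempty : Nonempty {w : V | w ≠ v} := ⟨⟨u, huv⟩⟩
  have hpre : ¬G'.Preconnected := fun hp => hd ((G'.connected_iff).mpr ⟨hp, hnonempty⟩)
  obtain ⟨x0, y0, hxy⟩ : ∃ x0 y0, ¬G'.Reachable x0 y0 := by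
    by_contra hcon
    push_neg at hcon
    exact hpre fun p q => hcon p q
  have ha : a ≠ v := h1.ne'
  set a' : {w : V | w ≠ v} := ⟨a, ha⟩ with ha'
  set b' : {w : V | w ≠ v} := ⟨b, h4⟩ with hb'
  have hab' : G'.Adj b' a' := h2.symm
  obtain ⟨z, hz⟩ : ∃ z : {w : V | w ≠ v}, ¬G'.Reachable b' z := by
    by_cases hbx : G'.Reachable b' x0
    · exact ⟨y0, fun h => hxy (hbx.symm.trans h)⟩
    · exact ⟨x0, hbx⟩
  obtain ⟨w2⟩ := hG.preconnected z.1 v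
  obtain ⟨c, hc, hvc, hrc⟩ := walk_W2 w2 z.2
  have hbc' : ¬G'.Reachable b' ⟨c, hc⟩ := fun h => hz (h.trans hrc)
  have hnbc : ¬G.Adj b c := fun h =>
    hbc' ((show G'.Adj b' ⟨c, hc⟩ from h).reachable)
  have hnac : ¬G.Adj a c := fun h =>
    hbc' (hab'.reachable.trans (show G'.Adj a' ⟨c, hc⟩ from h).reachable)
  exact ⟨b, a, v, c, h2.symm, h1.symm, hvc, fun h => h3 h.symm, hnbc, hnac⟩

set_option maxHeartbeats 1000000 in
/-- No graph on exactly three vertices is doubly connected. -/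
lemma no_doubly_connected_three {V : Type u} [Fintype V] {G : SimpleGraph V}
    (h3 : Fintype.card V = 3) (hG : G.Connected) (hGc : Gᶜ.Connected) : False := by
  classical
  obtain ⟨x, y, z, hxy, hxz, hyz, huniv⟩ :=
    Finset.card_eq_three.mp (show (Finset.univ : Finset V).card = 3 by
      rw [Finset.card_univ, h3])
  have hcov : ∀ t : V, t = x ∨ t = y ∨ t = z := by
    intro t
    have ht : t ∈ (Finset.univ : Finset V) := Finset.mem_univ t
    rw [huniv] at ht
    simpa using ht
  have hG3 : ∀ t : V, ∃ s, G.Adj t s := by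
    intro t
    obtain ⟨s, hs⟩ : ∃ s : V, s ≠ t := by
      rcases hcov t with rfl | rfl | rfl
      exacts [⟨y, hxy.symm⟩, ⟨x, hxy⟩, ⟨x, hxz⟩]
    exact exists_adj_of_reachable (hG.preconnected t s) (fun hh => hs hh.symm)
  have hGc3 : ∀ t : V, ∃ s, Gᶜ.Adj t s := by
    intro t
    obtain ⟨s, hs⟩ : ∃ s : V, s ≠ t := by
      rcases hcov t with rfl | rfl | rfl
      exacts [⟨y, hxy.symm⟩, ⟨x, hxy⟩, ⟨x, hxz⟩]
    exact exists_adj_of_reachable (hGc.preconnected t s) (fun hh => hs hh.symm)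
  have key : ∀ t : V, (∃ s, G.Adj t s) → (G.Adj t x ∨ G.Adj t y ∨ G.Adj t z) := by
    rintro t ⟨s, hs⟩
    rcases hcov s with rfl | rfl | rfl
    exacts [Or.inl hs, Or.inr (Or.inl hs), Or.inr (Or.inr hs)]
  have keyc : ∀ t : V, (∃ s, Gᶜ.Adj t s) →
      (¬G.Adj t x ∧ t ≠ x) ∨ (¬G.Adj t y ∧ t ≠ y) ∨ (¬G.Adj t z ∧ t ≠ z) := by
    rintro t ⟨s, hs⟩
    have h2 := not_adj_of_compl hs
    have h1 := hs.ne
    rcases hcov s with rfl | rfl | rfl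
    exacts [Or.inl ⟨h2, h1⟩, Or.inr (Or.inl ⟨h2, h1⟩), Or.inr (Or.inr ⟨h2, h1⟩)]
  have d1 : G.Adj x y ∨ G.Adj x z := by
    rcases key x (hG3 x) with h | h | h
    exacts [absurd h (G.irrefl), Or.inl h, Or.inr h]
  have d2 : G.Adj x y ∨ G.Adj y z := by
    rcases key y (hG3 y) with h | h | h
    exacts [Or.inl h.symm, absurd h (G.irrefl), Or.inr h]
  have d3 : G.Adj x z ∨ G.Adj y z := by
    rcases key z (hG3 z) with h | h | h
    exacts [Or.inl h.symm, Or.inr h.symm, absurd h (G.irrefl)]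
  have e1 : ¬G.Adj x y ∨ ¬G.Adj x z := by
    rcases keyc x (hGc3 x) with ⟨_, h⟩ | ⟨h, _⟩ | ⟨h, _⟩
    exacts [absurd rfl h, Or.inl h, Or.inr h]
  have e2 : ¬G.Adj x y ∨ ¬G.Adj y z := by
    rcases keyc y (hGc3 y) with ⟨h, _⟩ | ⟨_, h⟩ | ⟨h, _⟩
    exacts [Or.inl (fun hh => h hh.symm), absurd rfl h, Or.inr h]
  have e3 : ¬G.Adj x z ∨ ¬G.Adj y z := by
    rcases keyc z (hGc3 z) with ⟨h, _⟩ | ⟨h, _⟩ | ⟨_, h⟩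
    exacts [Or.inl (fun hh => h hh.symm), Or.inr (fun hh => h hh.symm), absurd rfl h]
  tauto

/-- Every doubly-connected graph on at least 4 vertices has an induced `P₄`. -/
lemma hasIP4_of_doubly_connected_aux : ∀ (n : ℕ) (V : Type u) [Fintype V]
    (G : SimpleGraph V), Fintype.card V = n → 4 ≤ n → G.Connected → Gᶜ.Connected →
    HasIP4 G := by
  intro n
  induction n using Nat.strong_induction_on with
  | _ n IH =>
    intro V _ G hcard hn hG hGc
    classical
    have hne : Nonempty V := Fintype.card_pos_iff.mp (by omega)
    obtain ⟨v⟩ := hne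
    have hnt : ∃ u : V, u ≠ v := by
      by_contra hcon
      push_neg at hcon
      have : Fintype.card V ≤ 1 := Fintype.card_le_one_iff.mpr (fun a b => by
        rw [hcon a, hcon b])
      omega
    by_cases hd : ¬(G.induce {w | w ≠ v}).Connected
    · exact hasIP4_of_delete_disconnects hG hGc v hnt hd
    push_neg at hd
    by_cases hdc : ¬(Gᶜ.induce {w | w ≠ v}).Connected
    · refine hasIP4_of_compl (hasIP4_of_delete_disconnects hGc ?_ v hnt hdc)
      rw [compl_compl]; exact hG
    push_neg at hdc
    rw [compl_induce] at hdc
    -- both G' and G'ᶜ connected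
    haveI : Fintype ({w : V | w ≠ v} : Set V) := Fintype.ofFinite _
    have hscard : Fintype.card ({w : V | w ≠ v} : Set V) = n - 1 := by
      have hs : ({w : V | w ≠ v} : Set V) = ({v} : Set V)ᶜ := by
        ext w; simp
      have h1 : ({v} : Set V).ncard + (({v} : Set V)ᶜ).ncard = Nat.card V :=
        Set.ncard_add_ncard_compl _
      rw [Set.ncard_singleton, Nat.card_eq_fintype_card, hcard] at h1
      rw [← Nat.card_eq_fintype_card, Nat.card_coe_set_eq, hs]
      omega
    by_cases h4 : n - 1 < 4
    · -- then n = 4 and the deleted graph has 3 vertices: impossible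
      exact absurd (no_doubly_connected_three (by omega : Fintype.card
        ({w : V | w ≠ v} : Set V) = 3) hd hdc) not_false
    · push_neg at h4
      exact hasIP4_induce (IH (n - 1) (by omega) _ (G.induce {w | w ≠ v}) hscard h4 hd hdc)

lemma hasIP4_of_doubly_connected {V : Type u} [Fintype V] {G : SimpleGraph V}
    (hn : 4 ≤ Fintype.card V) (hG : G.Connected) (hGc : Gᶜ.Connected) : HasIP4 G :=
  hasIP4_of_doubly_connected_aux (Fintype.card V) V G rfl hn hG hGc

/-- `D` is a locating-dominating set (LD-set) of `G`: for every two distinct vertices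
`u, v ∉ D`, the sets `N(u) ∩ D` and `N(v) ∩ D` are nonempty and distinct. -/
def IsLDSet {V : Type*} (G : SimpleGraph V) (D : Set V) : Prop :=
  ∀ u ∉ D, ∀ v ∉ D, u ≠ v →
    (G.neighborSet u ∩ D).Nonempty ∧ (G.neighborSet v ∩ D).Nonempty ∧
    G.neighborSet u ∩ D ≠ G.neighborSet v ∩ D

/-- The location-domination number `λ(G)`: the minimum cardinality of an LD-set. -/
noncomputable def ldNum {V : Type*} [Fintype V] (G : SimpleGraph V) : ℕ :=
  sInf {k | ∃ D : Set V, IsLDSet G D ∧ D.ncard = k}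

section LD
variable [Fintype V] {G : SimpleGraph V}

lemma ldNum_le_ncard {D : Set V} (h : IsLDSet G D) : ldNum G ≤ D.ncard :=
  Nat.sInf_le ⟨D, h, rfl⟩

lemma isLDSet_univ (G : SimpleGraph V) : IsLDSet G Set.univ :=
  fun u hu => absurd (Set.mem_univ u) hu

lemma two_le_ldNum (h3 : 3 ≤ Fintype.card V) : 2 ≤ ldNum G := by
  classical
  have hne : {k | ∃ D : Set V, IsLDSet G D ∧ D.ncard = k}.Nonempty :=
    ⟨_, Set.univ, isLDSet_univ G, rfl⟩
  obtain ⟨D, hD, hDcard⟩ := Nat.sInf_mem hne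
  by_contra hcon
  push_neg at hcon
  have hD1 : D.ncard ≤ 1 := by
    have : ldNum G < 2 := hcon
    rw [ldNum] at this
    omega
  have h2 : 1 < Dᶜ.ncard := by
    have := Set.ncard_add_ncard_compl D
    rw [Nat.card_eq_fintype_card] at this
    omega
  obtain ⟨u, hu, v, hv, huv⟩ := (Set.one_lt_ncard (Set.toFinite _)).1 h2
  obtain ⟨⟨zu, hzu⟩, ⟨zv, hzv⟩, hne'⟩ := hD u hu v hv huv
  apply hne'
  have hkey : ∀ t ∈ D, ∀ t' ∈ D, t = t' := (Set.ncard_le_one (Set.toFinite _)).1 hD1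
  ext t
  simp only [Set.mem_inter_iff]
  constructor
  · rintro ⟨ht, htD⟩
    have : t = zv := hkey t htD zv hzv.2
    cases this
    exact ⟨hzv.1, htD⟩
  · rintro ⟨ht, htD⟩
    have : t = zu := hkey t htD zu hzu.2
    cases this
    exact ⟨hzu.1, htD⟩

lemma not_mem2 {z u v : V} (h1 : z ≠ u) (h2 : z ≠ v) : z ∈ (({u, v} : Set V))ᶜ := by
  simp [h1, h2]

lemma notMem3 {z u v w : V} (h1 : z ≠ u) (h2 : z ≠ v) (h3 : z ≠ w) :
    z ∈ (({u, v, w} : Set V))ᶜ := by simp [h1, h2, h3]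

lemma trace_ne {x y z : V} {D : Set V} (hz : z ∈ G.neighborSet x ∩ D)
    (hnadj : ¬G.Adj y z) : G.neighborSet x ∩ D ≠ G.neighborSet y ∩ D :=
  fun h => hnadj (h ▸ hz).1

lemma isLDSet_pair (G : SimpleGraph V) (u v : V)
    (h1 : (G.neighborSet u ∩ (({u, v} : Set V))ᶜ).Nonempty)
    (h2 : (G.neighborSet v ∩ (({u, v} : Set V))ᶜ).Nonempty)
    (e12 : G.neighborSet u ∩ (({u, v} : Set V))ᶜ ≠ G.neighborSet v ∩ (({u, v} : Set V))ᶜ) :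
    IsLDSet G ((({u, v} : Set V))ᶜ) := by
  intro x hx y hy hxy
  simp only [Set.notMem_compl_iff, Set.mem_insert_iff, Set.mem_singleton_iff] at hx hy
  rcases hx with rfl | rfl <;> rcases hy with rfl | rfl <;>
    first
      | exact absurd rfl hxy
      | exact ⟨h1, h2, e12⟩
      | exact ⟨h2, h1, e12.symm⟩

lemma isLDSet_triple (G : SimpleGraph V) (u v w : V)
    (h1 : (G.neighborSet u ∩ (({u, v, w} : Set V))ᶜ).Nonempty)
    (h2 : (G.neighborSet v ∩ (({u, v, w} : Set V))ᶜ).Nonempty)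
    (h3 : (G.neighborSet w ∩ (({u, v, w} : Set V))ᶜ).Nonempty)
    (e12 : G.neighborSet u ∩ (({u, v, w} : Set V))ᶜ ≠ G.neighborSet v ∩ (({u, v, w} : Set V))ᶜ)
    (e13 : G.neighborSet u ∩ (({u, v, w} : Set V))ᶜ ≠ G.neighborSet w ∩ (({u, v, w} : Set V))ᶜ)
    (e23 : G.neighborSet v ∩ (({u, v, w} : Set V))ᶜ ≠ G.neighborSet w ∩ (({u, v, w} : Set V))ᶜ) :
    IsLDSet G ((({u, v, w} : Set V))ᶜ) := by
  intro x hx y hy hxy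
  simp only [Set.notMem_compl_iff, Set.mem_insert_iff, Set.mem_singleton_iff] at hx hy
  rcases hx with rfl | rfl | rfl <;> rcases hy with rfl | rfl | rfl <;>
    first
      | exact absurd rfl hxy
      | exact ⟨h1, h2, e12⟩
      | exact ⟨h1, h3, e13⟩
      | exact ⟨h2, h3, e23⟩
      | exact ⟨h2, h1, e12.symm⟩
      | exact ⟨h3, h1, e13.symm⟩
      | exact ⟨h3, h2, e23.symm⟩

lemma ldNum_le_sub_two {u v : V} (huv : u ≠ v)
    (h : IsLDSet G ((({u, v} : Set V))ᶜ)) : ldNum G ≤ Fintype.card V - 2 := by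
  have h1 := ldNum_le_ncard h
  have hc : ({u, v} : Set V).ncard + (({u, v} : Set V)ᶜ).ncard = Nat.card V :=
    Set.ncard_add_ncard_compl _
  rw [Set.ncard_pair huv, Nat.card_eq_fintype_card] at hc
  omega

lemma ldNum_le_sub_three {u v w : V} (huv : u ≠ v) (huw : u ≠ w) (hvw : v ≠ w)
    (h : IsLDSet G ((({u, v, w} : Set V))ᶜ)) : ldNum G ≤ Fintype.card V - 3 := by
  have h1 := ldNum_le_ncard h
  have hc : ({u, v, w} : Set V).ncard + (({u, v, w} : Set V)ᶜ).ncard = Nat.card V :=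
    Set.ncard_add_ncard_compl _
  have h3 : ({u, v, w} : Set V).ncard = 3 := by
    rw [Set.ncard_insert_of_notMem (by simp [huv, huw]), Set.ncard_pair hvw]
  rw [h3, Nat.card_eq_fintype_card] at hc
  omega

end LD

lemma ldNum_add_compl_le {V : Type u} [Fintype V] {G : SimpleGraph V}
    (hn : 5 ≤ Fintype.card V) (hG : G.Connected) (hGc : Gᶜ.Connected) :
    ldNum G + ldNum Gᶜ ≤ 2 * Fintype.card V - 5 := by
  classical
  obtain ⟨a, b, c, d, hab, hbc, hcd, hac, had, hbd⟩ :=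
    hasIP4_of_doubly_connected (by omega) hG hGc
  have hab' : a ≠ b := hab.ne
  have hbc' : b ≠ c := hbc.ne
  have hcd' : c ≠ d := hcd.ne
  have hac' : a ≠ c := by rintro rfl; exact had hcd
  have had' : a ≠ d := by rintro rfl; exact hac hcd.symm
  have hbd' : b ≠ d := by rintro rfl; exact had hab
  obtain ⟨x, hxa, hxb, hxc, hxd⟩ : ∃ x : V, x ≠ a ∧ x ≠ b ∧ x ≠ c ∧ x ≠ d := by
    by_contra hcon
    push_neg at hcon
    have hsub : (Finset.univ : Finset V) ⊆ {a, b, c, d} := by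
      intro t _
      simp only [Finset.mem_insert, Finset.mem_singleton]
      by_cases h1 : t = a
      · exact Or.inl h1
      by_cases h2 : t = b
      · exact Or.inr (Or.inl h2)
      by_cases h3 : t = c
      · exact Or.inr (Or.inr (Or.inl h3))
      exact Or.inr (Or.inr (Or.inr (hcon t h1 h2 h3)))
    have h4 := Finset.card_le_card hsub
    rw [Finset.card_univ] at h4
    have h5 : ({a, b, c, d} : Finset V).card ≤ 4 := by
      refine le_trans (Finset.card_insert_le _ _) ?_
      have h6 : ({b, c, d} : Finset V).card ≤ 3 := by
        refine le_trans (Finset.card_insert_le _ _) ?_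
        have h7 : ({c, d} : Finset V).card ≤ 2 :=
          le_trans (Finset.card_insert_le _ _) (by simp)
        omega
      omega
    omega
  -- pair bound for G using {a, d}
  have pairG : ldNum G ≤ Fintype.card V - 2 := by
    refine ldNum_le_sub_two had' (isLDSet_pair G a d
      ⟨b, hab, not_mem2 hab'.symm hbd'⟩
      ⟨c, hcd.symm, not_mem2 hac'.symm hcd'⟩
      (trace_ne ⟨hab, not_mem2 hab'.symm hbd'⟩ (fun h => hbd h.symm)))
  -- pair bound for Gᶜ using {b, c}
  have pairGc : ldNum Gᶜ ≤ Fintype.card V - 2 := by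
    refine ldNum_le_sub_two hbc' (isLDSet_pair Gᶜ b c
      ⟨d, cadj hbd' hbd, not_mem2 hbd'.symm hcd'.symm⟩
      ⟨a, cadj hac'.symm (fun h => hac h.symm), not_mem2 hab' hac'⟩
      (trace_ne ⟨cadj hbd' hbd, not_mem2 hbd'.symm hcd'.symm⟩
        (fun h => not_adj_of_compl h hcd)))
  have tri : ldNum G ≤ Fintype.card V - 3 ∨ ldNum Gᶜ ≤ Fintype.card V - 3 := by
    by_cases hq : G.Adj x b <;> by_cases hr : G.Adj x c
    · -- x ~ b, x ~ c : G-triple (a, d, x)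
      have mB : b ∈ (({a, d, x} : Set V))ᶜ := notMem3 hab'.symm hbd' hxb.symm
      have mC : c ∈ (({a, d, x} : Set V))ᶜ := notMem3 hac'.symm hcd' hxc.symm
      exact Or.inl (ldNum_le_sub_three had' hxa.symm hxd.symm (isLDSet_triple G a d x
        ⟨b, hab, mB⟩ ⟨c, hcd.symm, mC⟩ ⟨b, hq, mB⟩
        (trace_ne ⟨hab, mB⟩ (fun h => hbd h.symm))
        ((trace_ne ⟨hr, mC⟩ hac).symm)
        ((trace_ne ⟨hq, mB⟩ (fun h => hbd h.symm)).symm)))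
    · -- x ~ b, x ≁ c
      by_cases hp : G.Adj x a <;> by_cases ht : G.Adj x d
      · -- G-triple (b, c, x)
        have mA : a ∈ (({b, c, x} : Set V))ᶜ := notMem3 hab' hac' hxa.symm
        have mD : d ∈ (({b, c, x} : Set V))ᶜ := notMem3 hbd'.symm hcd'.symm hxd.symm
        exact Or.inl (ldNum_le_sub_three hbc' hxb.symm hxc.symm (isLDSet_triple G b c x
          ⟨a, hab.symm, mA⟩ ⟨d, hcd, mD⟩ ⟨a, hp, mA⟩
          (trace_ne ⟨hab.symm, mA⟩ (fun h => hac h.symm))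
          ((trace_ne ⟨ht, mD⟩ hbd).symm)
          ((trace_ne ⟨hp, mA⟩ (fun h => hac h.symm)).symm)))
      · -- x ~ a, x ≁ d : G-triple (b, d, x)
        have mA : a ∈ (({b, d, x} : Set V))ᶜ := notMem3 hab' had' hxa.symm
        have mC : c ∈ (({b, d, x} : Set V))ᶜ := notMem3 hbc'.symm hcd' hxc.symm
        exact Or.inl (ldNum_le_sub_three hbd' hxb.symm hxd.symm (isLDSet_triple G b d x
          ⟨a, hab.symm, mA⟩ ⟨c, hcd.symm, mC⟩ ⟨a, hp, mA⟩
          (trace_ne ⟨hab.symm, mA⟩ (fun h => had h.symm))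
          (trace_ne ⟨hbc, mC⟩ hr)
          ((trace_ne ⟨hp, mA⟩ (fun h => had h.symm)).symm)))
      · -- x ≁ a, x ~ d : Gᶜ-triple (a, b, x)
        have mC : c ∈ (({a, b, x} : Set V))ᶜ := notMem3 hac'.symm hbc'.symm hxc.symm
        have mD : d ∈ (({a, b, x} : Set V))ᶜ := notMem3 had'.symm hbd'.symm hxd.symm
        exact Or.inr (ldNum_le_sub_three hab' hxa.symm hxb.symm (isLDSet_triple Gᶜ a b x
          ⟨c, cadj hac' hac, mC⟩ ⟨d, cadj hbd' hbd, mD⟩ ⟨c, cadj hxc hr, mC⟩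
          (trace_ne ⟨cadj hac' hac, mC⟩ (fun h => not_adj_of_compl h hbc))
          (trace_ne ⟨cadj had' had, mD⟩ (fun h => not_adj_of_compl h ht))
          (trace_ne ⟨cadj hbd' hbd, mD⟩ (fun h => not_adj_of_compl h ht))))
      · -- x ≁ a, x ≁ d : Gᶜ-triple (b, c, x)
        have mA : a ∈ (({b, c, x} : Set V))ᶜ := notMem3 hab' hac' hxa.symm
        have mD : d ∈ (({b, c, x} : Set V))ᶜ := notMem3 hbd'.symm hcd'.symm hxd.symm
        exact Or.inr (ldNum_le_sub_three hbc' hxb.symm hxc.symm (isLDSet_triple Gᶜ b c x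
          ⟨d, cadj hbd' hbd, mD⟩ ⟨a, cadj hac'.symm (fun h => hac h.symm), mA⟩
          ⟨a, cadj hxa hp, mA⟩
          ((trace_ne ⟨cadj hac'.symm (fun h => hac h.symm), mA⟩
            (fun h => not_adj_of_compl h hab.symm)).symm)
          ((trace_ne ⟨cadj hxa hp, mA⟩ (fun h => not_adj_of_compl h hab.symm)).symm)
          ((trace_ne ⟨cadj hxd ht, mD⟩ (fun h => not_adj_of_compl h hcd)).symm)))
    · -- x ≁ b, x ~ c
      by_cases hp : G.Adj x a <;> by_cases ht : G.Adj x d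
      · -- G-triple (b, c, x)
        have mA : a ∈ (({b, c, x} : Set V))ᶜ := notMem3 hab' hac' hxa.symm
        have mD : d ∈ (({b, c, x} : Set V))ᶜ := notMem3 hbd'.symm hcd'.symm hxd.symm
        exact Or.inl (ldNum_le_sub_three hbc' hxb.symm hxc.symm (isLDSet_triple G b c x
          ⟨a, hab.symm, mA⟩ ⟨d, hcd, mD⟩ ⟨a, hp, mA⟩
          (trace_ne ⟨hab.symm, mA⟩ (fun h => hac h.symm))
          ((trace_ne ⟨ht, mD⟩ hbd).symm)
          ((trace_ne ⟨hp, mA⟩ (fun h => hac h.symm)).symm)))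
      · -- x ~ a, x ≁ d : Gᶜ-triple (c, d, x)
        have mA : a ∈ (({c, d, x} : Set V))ᶜ := notMem3 hac' had' hxa.symm
        have mB : b ∈ (({c, d, x} : Set V))ᶜ := notMem3 hbc' hbd' hxb.symm
        exact Or.inr (ldNum_le_sub_three hcd' hxc.symm hxd.symm (isLDSet_triple Gᶜ c d x
          ⟨a, cadj hac'.symm (fun h => hac h.symm), mA⟩
          ⟨b, cadj hbd'.symm (fun h => hbd h.symm), mB⟩
          ⟨b, cadj hxb hq, mB⟩
          ((trace_ne ⟨cadj hbd'.symm (fun h => hbd h.symm), mB⟩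
            (fun h => not_adj_of_compl h hbc.symm)).symm)
          (trace_ne ⟨cadj hac'.symm (fun h => hac h.symm), mA⟩
            (fun h => not_adj_of_compl h hp))
          (trace_ne ⟨cadj had'.symm (fun h => had h.symm), mA⟩
            (fun h => not_adj_of_compl h hp))))
      · -- x ≁ a, x ~ d : G-triple (a, c, x)
        have mB : b ∈ (({a, c, x} : Set V))ᶜ := notMem3 hab'.symm hbc' hxb.symm
        have mD : d ∈ (({a, c, x} : Set V))ᶜ := notMem3 had'.symm hcd'.symm hxd.symm
        exact Or.inl (ldNum_le_sub_three hac' hxa.symm hxc.symm (isLDSet_triple G a c x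
          ⟨b, hab, mB⟩ ⟨d, hcd, mD⟩ ⟨d, ht, mD⟩
          ((trace_ne ⟨hcd, mD⟩ had).symm)
          ((trace_ne ⟨ht, mD⟩ had).symm)
          (trace_ne ⟨hbc.symm, mB⟩ hq)))
      · -- x ≁ a, x ≁ d : Gᶜ-triple (b, c, x)
        have mA : a ∈ (({b, c, x} : Set V))ᶜ := notMem3 hab' hac' hxa.symm
        have mD : d ∈ (({b, c, x} : Set V))ᶜ := notMem3 hbd'.symm hcd'.symm hxd.symm
        exact Or.inr (ldNum_le_sub_three hbc' hxb.symm hxc.symm (isLDSet_triple Gᶜ b c x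
          ⟨d, cadj hbd' hbd, mD⟩ ⟨a, cadj hac'.symm (fun h => hac h.symm), mA⟩
          ⟨a, cadj hxa hp, mA⟩
          ((trace_ne ⟨cadj hac'.symm (fun h => hac h.symm), mA⟩
            (fun h => not_adj_of_compl h hab.symm)).symm)
          ((trace_ne ⟨cadj hxa hp, mA⟩ (fun h => not_adj_of_compl h hab.symm)).symm)
          ((trace_ne ⟨cadj hxd ht, mD⟩ (fun h => not_adj_of_compl h hcd)).symm)))
    · -- x ≁ b, x ≁ c : Gᶜ-triple (a, d, x)
      have mB : b ∈ (({a, d, x} : Set V))ᶜ := notMem3 hab'.symm hbd' hxb.symm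
      have mC : c ∈ (({a, d, x} : Set V))ᶜ := notMem3 hac'.symm hcd' hxc.symm
      exact Or.inr (ldNum_le_sub_three had' hxa.symm hxd.symm (isLDSet_triple Gᶜ a d x
        ⟨c, cadj hac' hac, mC⟩
        ⟨b, cadj hbd'.symm (fun h => hbd h.symm), mB⟩
        ⟨b, cadj hxb hq, mB⟩
        (trace_ne ⟨cadj hac' hac, mC⟩ (fun h => not_adj_of_compl h hcd.symm))
        ((trace_ne ⟨cadj hxb hq, mB⟩ (fun h => not_adj_of_compl h hab)).symm)
        ((trace_ne ⟨cadj hxc hr, mC⟩ (fun h => not_adj_of_compl h hcd.symm)).symm)))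
  rcases tri with h | h <;> omega

/-- For every doubly-connected graph `G` of order `n ≥ 5`,
`4 ≤ λ(G) + λ(Ḡ) ≤ 2n - 5`. -/
theorem ldNum_nordhaus_gaddum_doubly_connected {V : Type*} [Fintype V]
    (G : SimpleGraph V) (hn : 5 ≤ Fintype.card V) (hG : G.Connected)
    (hGc : Gᶜ.Connected) :
    4 ≤ ldNum G + ldNum Gᶜ ∧ ldNum G + ldNum Gᶜ ≤ 2 * Fintype.card V - 5 := by
  constructor
  · have l1 : 2 ≤ ldNum G := two_le_ldNum (by omega)
    have l2 : 2 ≤ ldNum Gᶜ := two_le_ldNum (by omega)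
    omega
  · exact ldNum_add_compl_le hn hG hGc
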